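/- For all natural k and n, ỹ_{2n+1} > ỹ_{2k}, i.e., every odd-indexed term of the sequence ỹ exceeds every even-indexed term. -/
import Mathlib


noncomputable def c : ℝ := 4 / (9 - Real.sqrt 5)
noncomputable def φ : ℝ := (1 + Real.sqrt 5) / 2

theorem stmt6 (y : ℕ → ℝ) (h1 : y 1 = c) (h2 : y 2 = c / 2)
    (hrec : ∀ n : ℕ, 1 ≤ n →
      2 * y (n + 1) = 2 * y n + c * (-1 : ℝ) ^ n * φ ^ ((1 : ℤ) - (n : ℤ)))
    (k n : ℕ) (hk : 1 ≤ k) (hn : 1 ≤ n) :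
    y (2 * n + 1) > y (2 * k) := by
  have hs : Real.sqrt 5 ^ 2 = 5 := Real.sq_sqrt (by norm_num)
  have hsn : (0:ℝ) ≤ Real.sqrt 5 := Real.sqrt_nonneg 5
  have hs1 : (1:ℝ) < Real.sqrt 5 := by nlinarith
  have hs3 : Real.sqrt 5 < 3 := by nlinarith
  have hφ1 : (1:ℝ) < φ := by unfold φ; linarith
  have hφ0 : (0:ℝ) < φ := by linarith
  have hφ2 : φ ^ 2 = φ + 1 := by unfold φ; nlinarith
  have hc : 0 < c := by
    unfold c
    apply div_pos <;> linarith
  have hφne : φ ≠ 0 := ne_of_gt hφ0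
  have hinv : φ⁻¹ = φ - 1 := by
    field_simp
    nlinarith
  have hinv0 : (0:ℝ) < φ⁻¹ := by rw [hinv]; linarith
  set A : ℝ := c * (3 - φ) / 2 with hA
  set B : ℝ := c * (φ - 1) / 2 with hB
  have hBpos : 0 < B := by
    rw [hB]
    have : (0:ℝ) < φ - 1 := by linarith
    positivity
  have hkeylem : -(B * φ⁻¹) - B + c / 2 = 0 := by
    rw [hinv, hB]; nlinarith
  have key : ∀ m : ℕ, 1 ≤ m → y m = A + B * (-φ⁻¹) ^ (m - 1) := by
    intro m hm
    induction m with
    | zero => omega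
    | succ p ih =>
      rcases Nat.lt_or_ge p 1 with hp | hp
      · interval_cases p
        simp [h1, hA, hB]; ring
      · obtain ⟨q, rfl⟩ : ∃ q, p = q + 1 := ⟨p - 1, by omega⟩
        have ihp := ih (by omega)
        have hr := hrec (q + 1) (by omega)
        have hz : φ ^ ((1 : ℤ) - ((q + 1 : ℕ) : ℤ)) = (φ⁻¹) ^ q := by
          have : (1 : ℤ) - ((q + 1 : ℕ) : ℤ) = -(q : ℤ) := by push_cast; ring
          rw [this, zpow_neg, zpow_natCast, inv_pow]
        rw [hz, ihp] at hr
        simp only [Nat.add_sub_cancel] at hr ⊢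
        rw [pow_succ, neg_pow φ⁻¹ q]
        rw [neg_pow φ⁻¹ q] at hr
        rw [hinv] at hr ⊢
        have hk2 : -((c * (φ - 1) / 2) * (φ - 1)) - (c * (φ - 1) / 2) + c / 2 = 0 := by
          nlinarith
        rw [hB]
        linear_combination hr / 2 + ((-1:ℝ) ^ q * (φ - 1) ^ q) * hk2 +
          (c * (-1:ℝ) ^ q * (φ - 1) ^ q) * hφ2
  have hodd := key (2 * n + 1) (by omega)
  have heven := key (2 * k) (by omega)
  simp only [Nat.add_sub_cancel] at hodd
  have h2k : 2 * k - 1 = 2 * (k - 1) + 1 := by omega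
  rw [h2k] at heven
  have e1 : (-φ⁻¹ : ℝ) ^ (2 * n) = (φ⁻¹) ^ (2 * n) :=
    Even.neg_pow (even_two_mul n) _
  have e2 : (-φ⁻¹ : ℝ) ^ (2 * (k - 1) + 1) = -((φ⁻¹) ^ (2 * (k - 1) + 1)) :=
    Odd.neg_pow (odd_two_mul_add_one _) _
  rw [e1] at hodd
  rw [e2] at heven
  have p1 : (0:ℝ) < (φ⁻¹) ^ (2 * n) := by positivity
  have p2 : (0:ℝ) < (φ⁻¹) ^ (2 * (k - 1) + 1) := by positivity
  rw [hodd, heven]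
  nlinarith
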